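/- Let n ≤ m, let D₀ = diag(α₁, ..., α_m) and D₁ = diag(β₁, ..., β_n) be diagonal positive semidefinite matrices with entries in decreasing order, with D₀ positive definite. Then for every m×n matrix K such that D₁ − Kᵀ D₀⁻¹ K is positive semidefinite, the squared Frobenius norm satisfies ‖K‖_F² ≤ tr(D₀^{(n)} D₁) = Σ_{i=1}^n α_i β_i. -/

import Mathlib

open Matrix Finset

/-- Rearrangement-type bound: if `0 ≤ t j ≤ 1` and `∑ t ≤ k`, then
`∑ β j * t j` is at most the sum of the `k` largest values of the antitone `β`. -/
lemma stmt5_aux_rearrange {n k : ℕ} (β : Fin n → ℝ) (hβ0 : ∀ j, 0 ≤ β j) (hβd : Antitone β)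
    (t : Fin n → ℝ) (ht0 : ∀ j, 0 ≤ t j) (ht1 : ∀ j, t j ≤ 1)
    (hts : ∑ j, t j ≤ (k : ℝ)) :
    ∑ j, β j * t j ≤ ∑ j ∈ univ.filter (fun j : Fin n => (j : ℕ) < k), β j := by
  by_cases hk : n ≤ k
  · have he : univ.filter (fun j : Fin n => (j : ℕ) < k) = univ := by
      ext j; simp [lt_of_lt_of_le j.isLt hk]
    rw [he]
    apply Finset.sum_le_sum
    intro j _
    nlinarith [hβ0 j, ht0 j, ht1 j]
  · push_neg at hk
    set c := β ⟨k, hk⟩ with hc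
    have hc0 : 0 ≤ c := hβ0 _
    have hcard : (univ.filter (fun j : Fin n => (j : ℕ) < k)).card = k := by
      have : univ.filter (fun j : Fin n => (j : ℕ) < k)
          = (univ : Finset (Fin k)).map ⟨Fin.castLE hk.le, Fin.castLE_injective _⟩ := by
        ext j
        simp only [mem_filter, mem_univ, true_and, mem_map, Function.Embedding.coeFn_mk]
        constructor
        · intro hj; exact ⟨⟨j.val, hj⟩, by ext; simp⟩
        · rintro ⟨a, rfl⟩; exact a.isLt
      rw [this, Finset.card_map, Finset.card_univ, Fintype.card_fin]
    have h1 : ∀ j ∈ univ.filter (fun j : Fin n => (j : ℕ) < k),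
        β j * t j ≤ β j - c * (1 - t j) := by
      intro j hj
      simp only [mem_filter] at hj
      have : c ≤ β j := hβd (by exact_mod_cast le_of_lt hj.2 : (⟨k, hk⟩ : Fin n) ≥ j).le
      nlinarith [ht1 j]
    have h2 : ∀ j ∈ univ.filter (fun j : Fin n => ¬ ((j : ℕ) < k)),
        β j * t j ≤ c * t j := by
      intro j hj
      simp only [mem_filter] at hj
      have hjk : (⟨k, hk⟩ : Fin n) ≤ j := by
        rw [Fin.le_def]; exact not_lt.mp hj.2
      exact mul_le_mul_of_nonneg_right (hβd hjk) (ht0 j)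
    rw [← Finset.sum_filter_add_sum_filter_not univ (fun j : Fin n => (j : ℕ) < k)
      (fun j => β j * t j)]
    have A := Finset.sum_le_sum h1
    have B := Finset.sum_le_sum h2
    have hsplit : ∑ j ∈ univ.filter (fun j : Fin n => (j : ℕ) < k), (β j - c * (1 - t j))
        = (∑ j ∈ univ.filter (fun j : Fin n => (j : ℕ) < k), β j)
          - c * (k - ∑ j ∈ univ.filter (fun j : Fin n => (j : ℕ) < k), t j) := by
      rw [Finset.sum_sub_distrib, ← Finset.mul_sum, Finset.sum_sub_distrib]
      simp [hcard, mul_sub]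
    have hB : ∑ j ∈ univ.filter (fun j : Fin n => ¬ ((j : ℕ) < k)), c * t j
        = c * ∑ j ∈ univ.filter (fun j : Fin n => ¬ ((j : ℕ) < k)), t j := by
      rw [Finset.mul_sum]
    have hts' : (∑ j ∈ univ.filter (fun j : Fin n => (j : ℕ) < k), t j)
        + (∑ j ∈ univ.filter (fun j : Fin n => ¬ ((j : ℕ) < k)), t j) = ∑ j, t j :=
      Finset.sum_filter_add_sum_filter_not univ _ _
    nlinarith [A, B]

/-- A PSD matrix dominated by `diagonal β` with rank at most `k` has trace at most the sum
of the `k` largest entries of `β`. -/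
lemma stmt5_trace_le_of_rank_le {n k : ℕ} (β : Fin n → ℝ) (hβ0 : ∀ j, 0 ≤ β j)
    (hβd : Antitone β) (B : Matrix (Fin n) (Fin n) ℝ) (hB : B.PosSemidef)
    (hDB : (Matrix.diagonal β - B).PosSemidef) (hrank : B.rank ≤ k) :
    B.trace ≤ ∑ j ∈ univ.filter (fun j : Fin n => (j : ℕ) < k), β j := by
  classical
  have hH : B.IsHermitian := hB.1
  set μ : Fin n → ℝ := hH.eigenvalues with hμ
  set v : Fin n → (Fin n → ℝ) := fun a => ⇑(hH.eigenvectorBasis a) with hv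
  have hray : ∀ a, ∑ j, v a j * ∑ j', B j j' * v a j' = μ a := by
    intro a
    have h1 := hH.mulVec_eigenvectorBasis a
    have h2 : ∀ j, ∑ j', B j j' * v a j' = μ a * v a j := by
      intro j
      have := congrFun h1 j
      simpa [Matrix.mulVec, dotProduct, hv, hμ] using this
    simp_rw [h2]
    have hnorm : ∑ j, v a j * v a j = 1 := by
      have := (orthonormal_iff_ite.mp hH.eigenvectorBasis.orthonormal) a a
      simp only [if_true, PiLp.inner_apply, RCLike.inner_apply, conj_trivial] at this
      simpa [mul_comm, hv] using this
    calc ∑ j, v a j * (μ a * v a j)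
        = μ a * ∑ j, v a j * v a j := by
          rw [Finset.mul_sum]; apply Finset.sum_congr rfl; intros; ring
      _ = μ a := by rw [hnorm, mul_one]
  have hbound : ∀ a, μ a ≤ ∑ j, β j * v a j ^ 2 := by
    intro a
    have := hDB.dotProduct_mulVec_nonneg (v a)
    rw [Matrix.sub_mulVec, dotProduct_sub] at this
    have hdiag : star (v a) ⬝ᵥ (Matrix.diagonal β *ᵥ v a) = ∑ j, β j * v a j ^ 2 := by
      simp [dotProduct, Matrix.mulVec_diagonal, sq]
      apply Finset.sum_congr rfl; intros; ring
    have hBv : star (v a) ⬝ᵥ (B *ᵥ v a) = μ a := by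
      rw [← hray a]
      simp [dotProduct, Matrix.mulVec]
    rw [hdiag, hBv] at this
    linarith
  set S := univ.filter (fun a : Fin n => μ a ≠ 0) with hS
  have hcardS : S.card ≤ k := by
    rw [hS, ← Fintype.card_subtype]
    exact le_trans (le_of_eq (hH.rank_eq_card_non_zero_eigs).symm) hrank
  have htr : B.trace = ∑ a ∈ S, μ a := by
    have : B.trace = ∑ a, μ a := by
      conv_lhs => rw [hH.spectral_theorem, Unitary.conjStarAlgAut_apply]
      rw [Matrix.trace_mul_comm, ← Matrix.mul_assoc,
        (Matrix.mem_unitaryGroup_iff').mp (Matrix.IsHermitian.eigenvectorUnitary hH).2, one_mul,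
        Matrix.trace_diagonal]
      simp [hμ]
    rw [this, hS]
    exact (Finset.sum_filter_ne_zero univ).symm
  set t : Fin n → ℝ := fun j => ∑ a ∈ S, v a j ^ 2 with ht
  have key : ∑ a ∈ S, μ a ≤ ∑ j, β j * t j := by
    calc ∑ a ∈ S, μ a ≤ ∑ a ∈ S, ∑ j, β j * v a j ^ 2 :=
          Finset.sum_le_sum (fun a _ => hbound a)
      _ = ∑ j, β j * t j := by
          rw [Finset.sum_comm]
          apply Finset.sum_congr rfl
          intro j _
          rw [ht, Finset.mul_sum]
  have ht0 : ∀ j, 0 ≤ t j := fun j => Finset.sum_nonneg (fun a _ => sq_nonneg _)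
  have ht1 : ∀ j, t j ≤ 1 := by
    intro j
    have hfull : ∑ a, v a j ^ 2 = 1 := by
      have := hH.eigenvectorBasis.sum_inner_mul_inner (EuclideanSpace.single j (1:ℝ))
        (EuclideanSpace.single j (1:ℝ))
      simpa [EuclideanSpace.inner_single_left, EuclideanSpace.inner_single_right, sq, hv]
        using this
    rw [ht, ← hfull]
    exact Finset.sum_le_sum_of_subset_of_nonneg (Finset.subset_univ S)
      (fun a _ _ => sq_nonneg _)
  have hts : ∑ j, t j ≤ (k : ℝ) := by
    have heq : ∑ j, t j = S.card := by
      rw [ht, Finset.sum_comm]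
      have : ∀ a ∈ S, ∑ j, v a j ^ 2 = 1 := by
        intro a _
        have := (orthonormal_iff_ite.mp hH.eigenvectorBasis.orthonormal) a a
        simp only [if_true, PiLp.inner_apply, RCLike.inner_apply, conj_trivial] at this
        simpa [mul_comm, sq, hv] using this
      rw [Finset.sum_congr rfl this]
      simp
    rw [heq]
    exact_mod_cast hcardS
  rw [htr]
  exact le_trans key (stmt5_aux_rearrange β hβ0 hβd t ht0 ht1 hts)

/-- Per-threshold bound: the Frobenius mass of the first `K` rows of `L` is bounded by the sum of
the `K` largest `β`'s, when `Lᵀ L ⪯ diagonal β`. -/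
lemma stmt5_rows_le {m n K : ℕ} (β : Fin n → ℝ) (hβ0 : ∀ j, 0 ≤ β j) (hβd : Antitone β)
    (L : Matrix (Fin m) (Fin n) ℝ)
    (hL : (Matrix.diagonal β - Lᵀ * L).PosSemidef) :
    (∑ i ∈ univ.filter (fun i : Fin m => (i : ℕ) < K), ∑ j, (L i j) ^ 2)
      ≤ ∑ j ∈ univ.filter (fun j : Fin n => (j : ℕ) < K), β j := by
  classical
  set N : Matrix (Fin m) (Fin n) ℝ := Matrix.of (fun i j => if (i : ℕ) < K then L i j else 0)
    with hN
  set M : Matrix (Fin m) (Fin n) ℝ := Matrix.of (fun i j => if (i : ℕ) < K then 0 else L i j)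
    with hM
  have hsplit : Lᵀ * L = Nᵀ * N + Mᵀ * M := by
    ext j j'
    simp only [Matrix.mul_apply, Matrix.add_apply, Matrix.transpose_apply, hN, hM, Matrix.of_apply,
      ← Finset.sum_add_distrib]
    apply Finset.sum_congr rfl
    intro i _
    split_ifs <;> ring
  have hct : ∀ (P : Matrix (Fin m) (Fin n) ℝ), (Pᵀ * P).PosSemidef := by
    intro P
    have := Matrix.posSemidef_conjTranspose_mul_self P
    rwa [Matrix.conjTranspose_eq_transpose_of_trivial] at this
  have hBpsd : (Nᵀ * N).PosSemidef := hct N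
  have hDB : (Matrix.diagonal β - Nᵀ * N).PosSemidef := by
    have : Matrix.diagonal β - Nᵀ * N = (Matrix.diagonal β - Lᵀ * L) + Mᵀ * M := by
      rw [hsplit]; abel
    rw [this]
    exact hL.add (hct M)
  have hw : N = Matrix.diagonal (fun i : Fin m => if (i : ℕ) < K then (1:ℝ) else 0) * L := by
    ext i j
    rw [Matrix.diagonal_mul]
    simp only [hN, Matrix.of_apply]
    split_ifs <;> simp
  have hrank : (Nᵀ * N).rank ≤ K := by
    rw [Matrix.rank_transpose_mul_self]
    calc N.rank ≤ (Matrix.diagonal (fun i : Fin m => if (i : ℕ) < K then (1:ℝ) else 0)).rank := by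
          rw [hw]; exact Matrix.rank_mul_le_left _ _
      _ ≤ K := by
          rw [Matrix.rank_diagonal]
          have : Fintype.card {i : Fin m // (if (i : ℕ) < K then (1:ℝ) else 0) ≠ 0}
              = Fintype.card {i : Fin m // (i : ℕ) < K} := by
            apply Fintype.card_congr
            apply Equiv.subtypeEquivRight
            intro i
            by_cases h : (i : ℕ) < K <;> simp [h]
          rw [this]
          have hinj : Function.Injective (fun x : {i : Fin m // (i : ℕ) < K} =>
              (⟨(x.1 : ℕ), x.2⟩ : Fin K)) := by
            intro a b hab
            apply Subtype.ext; apply Fin.ext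
            simpa [Fin.ext_iff] using hab
          simpa using Fintype.card_le_of_injective _ hinj
  have htrace : (Nᵀ * N).trace
      = ∑ i ∈ univ.filter (fun i : Fin m => (i : ℕ) < K), ∑ j, (L i j) ^ 2 := by
    rw [Matrix.trace]
    simp only [Matrix.diag_apply, Matrix.mul_apply, Matrix.transpose_apply, hN, Matrix.of_apply]
    rw [Finset.sum_comm]
    rw [← Finset.sum_filter_add_sum_filter_not univ (fun i : Fin m => (i : ℕ) < K)]
    have h2 : ∑ i ∈ univ.filter (fun i : Fin m => ¬ ((i : ℕ) < K)),
        ∑ j, (if (i : ℕ) < K then L i j else 0) * (if (i : ℕ) < K then L i j else 0) = 0 := by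
      apply Finset.sum_eq_zero
      intro i hi
      simp only [mem_filter] at hi
      simp [hi.2]
    rw [h2, add_zero]
    apply Finset.sum_congr rfl
    intro i hi
    simp only [mem_filter] at hi
    simp [hi.2, sq]
  rw [← htrace]
  exact stmt5_trace_le_of_rank_le β hβ0 hβd (Nᵀ * N) hBpsd hDB hrank

/-- Main inequality after the substitution `L = D₀^{-1/2} K`. -/
lemma stmt5_main {m n : ℕ} (h : n ≤ m) (α : Fin m → ℝ) (β : Fin n → ℝ)
    (hα : ∀ i, 0 < α i) (hβ0 : ∀ j, 0 ≤ β j) (hαd : Antitone α) (hβd : Antitone β)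
    (L : Matrix (Fin m) (Fin n) ℝ)
    (hL : (Matrix.diagonal β - Lᵀ * L).PosSemidef) :
    ∑ i, ∑ j, α i * (L i j) ^ 2 ≤ ∑ j : Fin n, α (Fin.castLE h j) * β j := by
  classical
  have FG : ∀ K : ℕ, (∑ i ∈ univ.filter (fun i : Fin m => (i : ℕ) < K), ∑ j, (L i j) ^ 2)
      ≤ ∑ j ∈ univ.filter (fun j : Fin n => (j : ℕ) < K), β j :=
    fun K => stmt5_rows_le β hβ0 hβd L hL
  set α' : ℕ → ℝ := fun k => if hk : k < m then α ⟨k, hk⟩ else 0 with hα'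
  set δ : ℕ → ℝ := fun k => α' k - α' (k + 1) with hδ
  have hδ0 : ∀ k, 0 ≤ δ k := by
    intro k
    rw [hδ, hα']
    dsimp only
    split_ifs with h1 h2
    · exact sub_nonneg.mpr (hαd (show (⟨k, h1⟩ : Fin m) ≤ ⟨k+1, h2⟩ by simp [Fin.le_def]))
    · simpa using (hα ⟨k, h1⟩).le
    · omega
    · simp
  have htel : ∀ K : ℕ, K < m → α' K = ∑ k ∈ Finset.Ico K m, δ k := by
    intro K hK
    have h2 := Finset.sum_Ico_eq_sub (fun k => α' k - α' (k+1)) hK.le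
    rw [hδ]
    rw [h2, Finset.sum_range_sub' α', Finset.sum_range_sub' α']
    have hm : α' m = 0 := by rw [hα']; simp
    rw [hm]; ring
  have hIco : ∀ K : ℕ, K < m →
      Finset.Ico K m = (Finset.range m).filter (fun k => K ≤ k) := by
    intro K _
    ext k
    simp [Finset.mem_Ico, Finset.mem_filter, Finset.mem_range, and_comm]
  have habel : ∀ (r : Fin m → ℝ),
      ∑ i, α' i.val * r i = ∑ k ∈ Finset.range m, δ k *
        ∑ i ∈ univ.filter (fun i : Fin m => (i : ℕ) < k + 1), r i := by
    intro r
    have step1 : ∀ i : Fin m, α' i.val * r i = ∑ k ∈ Finset.range m,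
        (if (i : ℕ) ≤ k then δ k * r i else 0) := by
      intro i
      rw [htel i.val i.isLt, Finset.sum_mul, hIco i.val i.isLt, Finset.sum_filter]
    calc ∑ i : Fin m, α' i.val * r i
        = ∑ i : Fin m, ∑ k ∈ Finset.range m, (if (i : ℕ) ≤ k then δ k * r i else 0) :=
          Finset.sum_congr rfl (fun i _ => step1 i)
      _ = ∑ k ∈ Finset.range m, ∑ i : Fin m, (if (i : ℕ) ≤ k then δ k * r i else 0) :=
          Finset.sum_comm
      _ = ∑ k ∈ Finset.range m, δ k *
            ∑ i ∈ univ.filter (fun i : Fin m => (i : ℕ) < k + 1), r i := by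
          apply Finset.sum_congr rfl
          intro k _
          rw [Finset.mul_sum, Finset.sum_filter]
          apply Finset.sum_congr rfl
          intro i _
          simp [Nat.lt_succ_iff]
  have hLHS : ∑ i, ∑ j, α i * (L i j) ^ 2
      = ∑ k ∈ Finset.range m, δ k *
        ∑ i ∈ univ.filter (fun i : Fin m => (i : ℕ) < k + 1), ∑ j, (L i j) ^ 2 := by
    rw [← habel (fun i => ∑ j, (L i j) ^ 2)]
    apply Finset.sum_congr rfl
    intro i _
    have hc : α' i.val = α i := by rw [hα']; simp [Fin.eta]
    rw [hc, Finset.mul_sum]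
  have habel2 : ∑ j : Fin n, α (Fin.castLE h j) * β j
      = ∑ k ∈ Finset.range m, δ k *
        ∑ j ∈ univ.filter (fun j : Fin n => (j : ℕ) < k + 1), β j := by
    have step1 : ∀ j : Fin n, α (Fin.castLE h j) * β j = ∑ k ∈ Finset.range m,
        (if (j : ℕ) ≤ k then δ k * β j else 0) := by
      intro j
      have hjm : (j : ℕ) < m := lt_of_lt_of_le j.isLt h
      have : α (Fin.castLE h j) = α' j.val := by
        rw [hα']; simp only [hjm, dif_pos]; congr 1
      rw [this, htel j.val hjm, Finset.sum_mul, hIco j.val hjm, Finset.sum_filter]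
    calc ∑ j : Fin n, α (Fin.castLE h j) * β j
        = ∑ j : Fin n, ∑ k ∈ Finset.range m, (if (j : ℕ) ≤ k then δ k * β j else 0) :=
          Finset.sum_congr rfl (fun j _ => step1 j)
      _ = ∑ k ∈ Finset.range m, ∑ j : Fin n, (if (j : ℕ) ≤ k then δ k * β j else 0) :=
          Finset.sum_comm
      _ = ∑ k ∈ Finset.range m, δ k *
            ∑ j ∈ univ.filter (fun j : Fin n => (j : ℕ) < k + 1), β j := by
          apply Finset.sum_congr rfl
          intro k _
          rw [Finset.mul_sum, Finset.sum_filter]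
          apply Finset.sum_congr rfl
          intro j _
          simp [Nat.lt_succ_iff]
  rw [hLHS, habel2]
  apply Finset.sum_le_sum
  intro k _
  exact mul_le_mul_of_nonneg_left (FG (k + 1)) (hδ0 k)

theorem stmt5 (m n : ℕ) (h : n ≤ m) (α : Fin m → ℝ) (β : Fin n → ℝ)
    (hα : ∀ i, 0 < α i) (hβ : ∀ i, 0 ≤ β i)
    (hαd : Antitone α) (hβd : Antitone β)
    (K : Matrix (Fin m) (Fin n) ℝ)
    (hschur : (Matrix.diagonal β - Kᵀ * (Matrix.diagonal α)⁻¹ * K).PosSemidef) :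
    Matrix.trace (Kᵀ * K) ≤ ∑ i : Fin n, α (Fin.castLE h i) * β i := by
  classical
  set L : Matrix (Fin m) (Fin n) ℝ := Matrix.of (fun i j => K i j / Real.sqrt (α i)) with hLdef
  have hdinv : (Matrix.diagonal α)⁻¹ = Matrix.diagonal (fun i => (α i)⁻¹) := by
    apply Matrix.inv_eq_right_inv
    rw [Matrix.diagonal_mul_diagonal]
    ext i j
    by_cases hij : i = j
    · subst hij; simp [mul_inv_cancel₀ (hα i).ne']
    · simp [Matrix.diagonal_apply_ne _ hij, Matrix.one_apply_ne hij]
  have hLtL : Lᵀ * L = Kᵀ * (Matrix.diagonal α)⁻¹ * K := by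
    rw [hdinv, Matrix.mul_assoc]
    ext j j'
    simp only [Matrix.mul_apply, Matrix.transpose_apply, hLdef, Matrix.of_apply]
    apply Finset.sum_congr rfl
    intro i _
    rw [Finset.sum_eq_single i]
    · rw [Matrix.diagonal_apply_eq]
      rw [div_mul_div_comm, Real.mul_self_sqrt (hα i).le, div_eq_mul_inv]
      ring
    · intro b _ hb
      simp [Matrix.diagonal_apply_ne _ (Ne.symm hb)]
    · intro hi; exact absurd (Finset.mem_univ i) hi
  have hpsd : (Matrix.diagonal β - Lᵀ * L).PosSemidef := by rw [hLtL]; exact hschur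
  have htr : Matrix.trace (Kᵀ * K) = ∑ i, ∑ j, α i * (L i j) ^ 2 := by
    rw [Matrix.trace]
    simp only [Matrix.diag_apply, Matrix.mul_apply, Matrix.transpose_apply, hLdef,
      Matrix.of_apply]
    rw [Finset.sum_comm]
    apply Finset.sum_congr rfl
    intro i _
    apply Finset.sum_congr rfl
    intro j _
    rw [div_pow, Real.sq_sqrt (hα i).le]
    rw [mul_div_cancel₀ _ (hα i).ne']
    ring
  rw [htr]
  exact stmt5_main h α β hα hβ hαd hβd L hpsd
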